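/- For every prime p > 7, one has t(p) + 2·l(p) − 1 ≤ 2·log₂(p − 1) − 1, where l(p) and t(p) are the length and tail of the sequence of lower halves of p, and log₂ denotes the real base-2 logarithm. -/

import Mathlib

/-- The lower half of a positive integer: `lh m = ⌊m/2⌋`. -/
def lh (m : ℕ) : ℕ := m / 2

/-- The length of the sequence of lower halves of `n`: the least positive `i`
such that the `i`-th iterate of `lh` at `n` lies in `{2, 3, 4}`. -/
noncomputable def lhLen (n : ℕ) : ℕ :=
  sInf {i : ℕ | 0 < i ∧ lh^[i] n ∈ ({2, 3, 4} : Set ℕ)}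

/-- The tail of the sequence of lower halves of `n`: its last term. -/
noncomputable def lhTail (n : ℕ) : ℕ := lh^[lhLen n] n

lemma lh_iter (i n : ℕ) : lh^[i] n = n / 2 ^ i := by
  induction i generalizing n with
  | zero => simp
  | succ k ih =>
    rw [Function.iterate_succ_apply, ih]
    show n / 2 / 2 ^ k = n / 2 ^ (k + 1)
    rw [Nat.div_div_eq_div_mul, pow_succ, mul_comm]

lemma exists_mem (n : ℕ) (hn : 5 ≤ n) :
    ∃ i, 0 < i ∧ n / 2 ^ i ∈ ({2, 3, 4} : Set ℕ) := by
  induction n using Nat.strong_induction_on with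
  | _ n ih =>
    by_cases h : n ≤ 9
    · refine ⟨1, one_pos, ?_⟩
      simp only [Set.mem_insert_iff, Set.mem_singleton_iff, pow_one]
      interval_cases n <;> omega
    · obtain ⟨i, hi, hm⟩ := ih (n / 2) (by omega) (by omega)
      refine ⟨i + 1, by omega, ?_⟩
      rwa [pow_succ, mul_comm, ← Nat.div_div_eq_div_mul]

theorem tail_add_two_len_sub_one_le_logb (p : ℕ) (hp : p.Prime) (h7 : 7 < p) :
    (lhTail p : ℝ) + 2 * (lhLen p : ℝ) - 1 ≤ 2 * Real.logb 2 ((p : ℝ) - 1) - 1 := by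
  have hset : {i : ℕ | 0 < i ∧ lh^[i] p ∈ ({2, 3, 4} : Set ℕ)}.Nonempty := by
    obtain ⟨i, hi, hm⟩ := exists_mem p (by omega)
    exact ⟨i, hi, by rwa [lh_iter]⟩
  have hmem := Nat.sInf_mem hset
  obtain ⟨hl1, hmem2⟩ := hmem
  set l := lhLen p with hl
  have hlpos : 0 < l := hl1
  set t := lhTail p with htdef
  have ht : t = p / 2 ^ l := lh_iter l p
  rw [lh_iter] at hmem2
  have htm : t = 2 ∨ t = 3 ∨ t = 4 := by
    rw [ht]; exact hmem2
  have hle : t * 2 ^ l ≤ p := by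
    rw [ht]; exact Nat.div_mul_le_self p (2 ^ l)
  have podd : Odd p := hp.odd_of_ne_two (by omega)
  have hlt : t * 2 ^ l < p := by
    rcases eq_or_lt_of_le hle with he | h
    · exfalso
      have : 2 ∣ p := by
        rw [← he]
        exact Dvd.dvd.mul_left (dvd_pow_self 2 (by omega : l ≠ 0)) t
      rcases podd with ⟨k, hk⟩; omega
    · exact h
  have key : 2 ^ (t + 2 * l) ≤ (p - 1) ^ 2 := by
    have h1 : 2 ^ t ≤ t ^ 2 := by rcases htm with h | h | h <;> rw [h] <;> norm_num
    calc 2 ^ (t + 2 * l) = 2 ^ t * (2 ^ l) ^ 2 := by ring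
      _ ≤ t ^ 2 * (2 ^ l) ^ 2 := by gcongr
      _ = (t * 2 ^ l) ^ 2 := by ring
      _ ≤ (p - 1) ^ 2 := by gcongr; omega
  have hcast : ((p : ℝ) - 1) = ((p - 1 : ℕ) : ℝ) := by
    rw [Nat.cast_sub (by omega)]; simp
  have hmono : Real.logb 2 ((2 ^ (t + 2 * l) : ℕ) : ℝ) ≤
      Real.logb 2 (((p - 1) ^ 2 : ℕ) : ℝ) := by
    apply Real.logb_le_logb_of_le one_lt_two (by positivity)
    exact_mod_cast key
  rw [Nat.cast_pow, Nat.cast_pow, Nat.cast_ofNat, Real.logb_pow, Real.logb_pow,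
    Real.logb_self_eq_one (by norm_num : (1:ℝ) < 2)] at hmono
  rw [hcast]
  push_cast at hmono ⊢
  linarith
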